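/- For every continuously differentiable function v : ℝ² → ℝ with v(x,0) = 0 for all x ∈ [α, α+r], one has ∫_{Ω_h^{α,α+r}} |v(x,y)|^p dx dy ≤ (L0 r)^p ∫_{Ω_h^{α,α+r}} |∇v(x,y)|^p dx dy; in particular ‖v‖_{L^p(Ω_h^{α,α+r})} ≤ L0 r ‖∇v‖_{L^p(Ω_h^{α,α+r})}. -/

import Mathlib

open MeasureTheory Set
open scoped ENNReal

lemma holder_iv {g : ℝ → ℝ} {b : ℝ} (hg : Continuous g)
    (hg0 : ∀ t, 0 ≤ g t) {p : ℝ} (hp : 1 ≤ p) :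
    (∫ t in Set.Ioo 0 b, g t) ^ p ≤ b ^ (p - 1) * ∫ t in Set.Ioo 0 b, g t ^ p := by
  rcases eq_or_lt_of_le hp with hp1 | hp1
  · simp [← hp1]
  rcases le_or_gt b 0 with hb | hb
  · rw [Set.Ioo_eq_empty (by linarith)]
    simp [Real.zero_rpow (by positivity : p ≠ 0)]
  have hp0 : (0:ℝ) < p := by linarith
  have hgp : Continuous fun t => g t ^ p :=
    hg.rpow_const (fun t => Or.inr (by positivity))
  have hig : IntegrableOn g (Set.Ioo 0 b) :=
    hg.integrableOn_Ioc.mono_set Set.Ioo_subset_Ioc_self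
  have higp : IntegrableOn (fun t => g t ^ p) (Set.Ioo 0 b) :=
    hgp.integrableOn_Ioc.mono_set Set.Ioo_subset_Ioc_self
  have h1 : ENNReal.ofReal (∫ t in Set.Ioo 0 b, g t)
      = ∫⁻ t in Set.Ioo 0 b, ENNReal.ofReal (g t) :=
    ofReal_integral_eq_lintegral_ofReal hig (Filter.Eventually.of_forall fun t => hg0 t)
  have h2 : ENNReal.ofReal (∫ t in Set.Ioo 0 b, g t ^ p)
      = ∫⁻ t in Set.Ioo 0 b, (ENNReal.ofReal (g t)) ^ p := by
    rw [ofReal_integral_eq_lintegral_ofReal higp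
      (Filter.Eventually.of_forall fun t => Real.rpow_nonneg (hg0 t) p)]
    exact lintegral_congr fun t => (ENNReal.ofReal_rpow_of_nonneg (hg0 t) hp0.le).symm
  set q := Real.conjExponent p with hq
  have hpq : p.HolderConjugate q := Real.HolderConjugate.conjExponent hp1
  have hH := ENNReal.lintegral_mul_le_Lp_mul_Lq (volume.restrict (Set.Ioo 0 b)) hpq
    (hg.measurable.ennreal_ofReal.aemeasurable) aemeasurable_const
    (f := fun t => ENNReal.ofReal (g t)) (g := fun _ => 1)
  simp only [mul_one, ENNReal.one_rpow, lintegral_const,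
    Measure.restrict_apply MeasurableSet.univ, Set.univ_inter, Real.volume_Ioo, sub_zero, Pi.mul_apply, mul_one, one_mul] at hH
  -- hH : ∫⁻ ofReal (g t) ≤ (∫⁻ ofReal(g)^p)^(1/p) * (ofReal b)^(1/q)
  have key : ENNReal.ofReal ((∫ t in Set.Ioo 0 b, g t) ^ p)
      ≤ ENNReal.ofReal (b ^ (p - 1) * ∫ t in Set.Ioo 0 b, g t ^ p) := by
    have hLcalc : ENNReal.ofReal ((∫ t in Set.Ioo 0 b, g t) ^ p)
        = (ENNReal.ofReal (∫ t in Set.Ioo 0 b, g t)) ^ p :=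
      (ENNReal.ofReal_rpow_of_nonneg (setIntegral_nonneg measurableSet_Ioo fun t _ => hg0 t)
        hp0.le).symm
    rw [hLcalc, h1]
    calc (∫⁻ t in Set.Ioo 0 b, ENNReal.ofReal (g t)) ^ p
        ≤ (((∫⁻ t in Set.Ioo 0 b, (ENNReal.ofReal (g t)) ^ p) ^ (1/p))
            * (ENNReal.ofReal b) ^ (1/q)) ^ p :=
          ENNReal.rpow_le_rpow hH hp0.le
      _ = (∫⁻ t in Set.Ioo 0 b, (ENNReal.ofReal (g t)) ^ p)
            * (ENNReal.ofReal b) ^ (p - 1) := by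
          rw [ENNReal.mul_rpow_of_nonneg _ _ hp0.le, ← ENNReal.rpow_mul, ← ENNReal.rpow_mul]
          congr 1
          · rw [one_div, inv_mul_cancel₀ hp0.ne', ENNReal.rpow_one]
          · congr 1
            rw [hq, Real.conjExponent]
            field_simp
      _ = ENNReal.ofReal (b ^ (p - 1) * ∫ t in Set.Ioo 0 b, g t ^ p) := by
          rw [← h2, ENNReal.ofReal_rpow_of_nonneg hb.le (by linarith : (0:ℝ) ≤ p - 1),
            mul_comm, ← ENNReal.ofReal_mul (Real.rpow_nonneg hb.le _)]
  exact (ENNReal.ofReal_le_ofReal_iff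
    (mul_nonneg (Real.rpow_nonneg hb.le _)
      (setIntegral_nonneg measurableSet_Ioo fun t _ => Real.rpow_nonneg (hg0 t) p))).mp key


lemma omega_isOpen (L0 α β r : ℝ) (h : ℝ → ℝ) (hL0 : 0 ≤ L0)
    (hLip : ∀ x1 ∈ Set.Icc α β, ∀ x2 ∈ Set.Icc α β, |h x1 - h x2| ≤ L0 * |x1 - x2|)
    (hrβ : α + r ≤ β) :
    IsOpen {q : ℝ × ℝ | α < q.1 ∧ q.1 < α + r ∧ 0 < q.2 ∧ q.2 < h q.1} := by
  rw [Metric.isOpen_iff]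
  rintro ⟨x, y⟩ ⟨h1, h2, h3, h4⟩
  have hL1 : (0:ℝ) < L0 + 1 := by linarith
  set ε := min (min (x - α) (α + r - x)) (min y ((h x - y) / (L0 + 1))) with hε
  have hεpos : 0 < ε := by
    refine lt_min (lt_min (by linarith) (by linarith)) (lt_min h3 (div_pos (by linarith) hL1))
  refine ⟨ε, hεpos, ?_⟩
  rintro ⟨x', y'⟩ hq'
  rw [Metric.mem_ball, Prod.dist_eq, max_lt_iff] at hq'
  obtain ⟨d1, d2⟩ := hq'
  rw [Real.dist_eq, abs_lt] at d1 d2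
  have e1 : ε ≤ x - α := (min_le_left _ _).trans (min_le_left _ _)
  have e2 : ε ≤ α + r - x := (min_le_left _ _).trans (min_le_right _ _)
  have e3 : ε ≤ y := (min_le_right _ _).trans (min_le_left _ _)
  have e4 : ε ≤ (h x - y) / (L0 + 1) := (min_le_right _ _).trans (min_le_right _ _)
  have e4' : (L0 + 1) * ε ≤ h x - y := by
    rw [mul_comm]
    exact (le_div_iff₀ hL1).mp e4
  have hx'1 : α < x' := by linarith
  have hx'2 : x' < α + r := by linarith
  refine ⟨hx'1, hx'2, by linarith, ?_⟩
  have hxm : x ∈ Set.Icc α β := ⟨by linarith, by linarith⟩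
  have hx'm : x' ∈ Set.Icc α β := ⟨by linarith, by linarith⟩
  have hl := hLip x hxm x' hx'm
  have : h x - h x' ≤ L0 * ε := by
    have h5 : |x - x'| ≤ ε := by
      rw [abs_le]; constructor <;> linarith
    calc h x - h x' ≤ |h x - h x'| := le_abs_self _
      _ ≤ L0 * |x - x'| := hl
      _ ≤ L0 * ε := by exact mul_le_mul_of_nonneg_left h5 hL0
  -- y' < y + ε ≤ h x - L0 ε ≤ h x'
  have : y + ε ≤ h x' := by nlinarith
  linarith

lemma omega_fubini (α b : ℝ) (h : ℝ → ℝ)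
    (hΩ : MeasurableSet {q : ℝ × ℝ | α < q.1 ∧ q.1 < b ∧ 0 < q.2 ∧ q.2 < h q.1})
    (f : ℝ × ℝ → ℝ≥0∞) (hf : Measurable f) :
    ∫⁻ q in {q : ℝ × ℝ | α < q.1 ∧ q.1 < b ∧ 0 < q.2 ∧ q.2 < h q.1}, f q
      = ∫⁻ x in Set.Ioo α b, ∫⁻ y in Set.Ioo 0 (h x), f (x, y) := by
  set Ω := {q : ℝ × ℝ | α < q.1 ∧ q.1 < b ∧ 0 < q.2 ∧ q.2 < h q.1} with hΩdef
  rw [← lintegral_indicator hΩ]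
  rw [Measure.volume_eq_prod, lintegral_prod _ ((hf.indicator hΩ).aemeasurable)]
  have key : ∀ x : ℝ, (∫⁻ y, Ω.indicator f (x, y))
      = (Set.Ioo α b).indicator (fun x => ∫⁻ y in Set.Ioo 0 (h x), f (x, y)) x := by
    intro x
    by_cases hx : x ∈ Set.Ioo α b
    · rw [Set.indicator_of_mem hx, ← lintegral_indicator measurableSet_Ioo]
      congr 1
      funext y
      by_cases hy : y ∈ Set.Ioo 0 (h x)
      · rw [Set.indicator_of_mem hy,
          Set.indicator_of_mem (show (x, y) ∈ Ω from ⟨hx.1, hx.2, hy.1, hy.2⟩)]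
      · rw [Set.indicator_of_notMem hy, Set.indicator_of_notMem (fun hc => hy ⟨hc.2.2.1, hc.2.2.2⟩)]
    · rw [Set.indicator_of_notMem hx]
      have : ∀ y : ℝ, Ω.indicator f (x, y) = 0 := by
        intro y
        apply Set.indicator_of_notMem
        intro hc
        exact hx ⟨hc.1, hc.2.1⟩
      simp [this]
  calc ∫⁻ x, ∫⁻ y, Ω.indicator f (x, y)
      = ∫⁻ x, (Set.Ioo α b).indicator (fun x => ∫⁻ y in Set.Ioo 0 (h x), f (x, y)) x := by
        exact lintegral_congr key
    _ = ∫⁻ x in Set.Ioo α b, ∫⁻ y in Set.Ioo 0 (h x), f (x, y) := by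
        rw [lintegral_indicator measurableSet_Ioo]


/-- Poincaré's inequality on `Ω_h^{α,α+r}`: if `v` is `C¹` with `v(x,0) = 0` for
`x ∈ [α, α+r]`, then `∫_{Ω} |v|^p ≤ (L0 r)^p ∫_{Ω} |∇v|^p`, and in particular
`‖v‖_{L^p(Ω)} ≤ L0 r ‖∇v‖_{L^p(Ω)}`. -/
theorem stmt_10 (L0 : ℝ) (hL0 : 1 ≤ L0) (α β : ℝ) (hαβ : α < β)
    (h : ℝ → ℝ)
    (hnonneg : ∀ x ∈ Set.Icc α β, 0 ≤ h x)
    (hLip : ∀ x1 ∈ Set.Icc α β, ∀ x2 ∈ Set.Icc α β, |h x1 - h x2| ≤ L0 * |x1 - x2|)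
    (hhα : h α = 0) (hhβ : h β = 0)
    (r : ℝ) (hr : 0 < r) (hrβ : r < β - α)
    (p : ℝ) (hp : 1 ≤ p)
    (v : ℝ × ℝ → ℝ) (hv : ContDiff ℝ 1 v)
    (hv0 : ∀ x ∈ Set.Icc α (α + r), v (x, 0) = 0) :
    ((∫ q in {q : ℝ × ℝ | α < q.1 ∧ q.1 < α + r ∧ 0 < q.2 ∧ q.2 < h q.1}, |v q| ^ p) ≤
      (L0 * r) ^ p *
        ∫ q in {q : ℝ × ℝ | α < q.1 ∧ q.1 < α + r ∧ 0 < q.2 ∧ q.2 < h q.1},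
          ‖fderiv ℝ v q‖ ^ p) ∧
    ((∫ q in {q : ℝ × ℝ | α < q.1 ∧ q.1 < α + r ∧ 0 < q.2 ∧ q.2 < h q.1},
        |v q| ^ p) ^ (1 / p) ≤
      L0 * r *
        (∫ q in {q : ℝ × ℝ | α < q.1 ∧ q.1 < α + r ∧ 0 < q.2 ∧ q.2 < h q.1},
          ‖fderiv ℝ v q‖ ^ p) ^ (1 / p)) := by
  set Ω := {q : ℝ × ℝ | α < q.1 ∧ q.1 < α + r ∧ 0 < q.2 ∧ q.2 < h q.1} with hΩdef
  set C := L0 * r with hCdef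
  have hL0' : (0:ℝ) < L0 := lt_of_lt_of_le one_pos hL0
  have hC : (0:ℝ) < C := mul_pos hL0' hr
  have hp0 : (0:ℝ) < p := lt_of_lt_of_le one_pos hp
  have hΩo : IsOpen Ω := omega_isOpen L0 α β r h hL0'.le hLip (by linarith)
  have hΩm : MeasurableSet Ω := hΩo.measurableSet
  have hvc : Continuous v := hv.continuous
  have hD : Continuous fun q : ℝ × ℝ => ‖fderiv ℝ v q‖ := (hv.continuous_fderiv one_ne_zero).norm
  have hD0 : ∀ q : ℝ × ℝ, (0:ℝ) ≤ ‖fderiv ℝ v q‖ := fun q => norm_nonneg _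
  have hDp : Continuous fun q : ℝ × ℝ => ‖fderiv ℝ v q‖ ^ p :=
    hD.rpow_const (fun q => Or.inr hp0.le)
  have hvp : Continuous fun q : ℝ × ℝ => |v q| ^ p :=
    (hvc.abs).rpow_const (fun q => Or.inr hp0.le)
  have hhle : ∀ x ∈ Set.Icc α (α + r), h x ≤ C := by
    intro x hx
    have hxm : x ∈ Set.Icc α β := ⟨hx.1, by linarith [hx.2]⟩
    have hl := hLip x hxm α ⟨le_rfl, by linarith⟩
    rw [hhα, sub_zero] at hl
    have h2 : |x - α| ≤ r := by rw [abs_le]; constructor <;> [linarith [hx.1]; linarith [hx.2]]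
    calc h x ≤ |h x| := le_abs_self _
      _ ≤ L0 * |x - α| := hl
      _ ≤ L0 * r := mul_le_mul_of_nonneg_left h2 hL0'.le
  have hhnn : ∀ x ∈ Set.Icc α (α + r), 0 ≤ h x := fun x hx =>
    hnonneg x ⟨hx.1, by linarith [hx.2]⟩
  have hKint : ∀ x : ℝ, IntegrableOn (fun t => ‖fderiv ℝ v (x, t)‖ ^ p) (Set.Ioo 0 (h x)) := by
    intro x
    have : Continuous fun t : ℝ => ‖fderiv ℝ v (x, t)‖ ^ p :=
      hDp.comp (continuous_const.prodMk continuous_id)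
    exact this.integrableOn_Ioc.mono_set Set.Ioo_subset_Ioc_self
  have hKnn : ∀ x : ℝ, 0 ≤ ∫ t in Set.Ioo 0 (h x), ‖fderiv ℝ v (x, t)‖ ^ p := fun x =>
    setIntegral_nonneg measurableSet_Ioo fun t _ => Real.rpow_nonneg (hD0 _) p
  -- pointwise core bound
  have core : ∀ x ∈ Set.Ioo α (α + r), ∀ y ∈ Set.Ioo 0 (h x),
      |v (x, y)| ^ p ≤ C ^ (p - 1) * ∫ t in Set.Ioo 0 (h x), ‖fderiv ℝ v (x, t)‖ ^ p := by
    intro x hx y hy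
    have hxIcc : x ∈ Set.Icc α (α + r) := ⟨hx.1.le, hx.2.le⟩
    have hhx0 : 0 ≤ h x := hhnn x hxIcc
    have hder : ∀ t : ℝ, HasDerivAt (fun t => v (x, t)) (fderiv ℝ v (x, t) (0, 1)) t := by
      intro t
      exact (hv.differentiable one_ne_zero (x, t)).hasFDerivAt.comp_hasDerivAt t
        ((hasDerivAt_const t x).prodMk (hasDerivAt_id t))
    have hφc : Continuous fun t : ℝ => fderiv ℝ v (x, t) (0, 1) :=
      ((hv.continuous_fderiv one_ne_zero).comp
        (continuous_const.prodMk continuous_id)).clm_apply continuous_const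
    have hDxc : Continuous fun t : ℝ => ‖fderiv ℝ v (x, t)‖ :=
      hD.comp (continuous_const.prodMk continuous_id)
    have hftc := intervalIntegral.integral_eq_sub_of_hasDerivAt
      (f := fun t => v (x, t)) (f' := fun t => fderiv ℝ v (x, t) (0, 1))
      (fun t _ => hder t) (hφc.intervalIntegrable 0 y)
    simp only [hv0 x hxIcc, sub_zero] at hftc
    have hstep1 : |v (x, y)| ≤ ∫ t in Set.Ioo 0 (h x), ‖fderiv ℝ v (x, t)‖ := by
      rw [← hftc]
      calc |∫ t in (0:ℝ)..y, fderiv ℝ v (x, t) (0, 1)|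
          ≤ ∫ t in (0:ℝ)..y, |fderiv ℝ v (x, t) (0, 1)| :=
            intervalIntegral.abs_integral_le_integral_abs hy.1.le
        _ ≤ ∫ t in (0:ℝ)..y, ‖fderiv ℝ v (x, t)‖ := by
            apply intervalIntegral.integral_mono_on hy.1.le
              (hφc.abs.intervalIntegrable 0 y) (hDxc.intervalIntegrable 0 y)
            intro t _
            calc |fderiv ℝ v (x, t) (0, 1)| ≤ ‖fderiv ℝ v (x, t)‖ * ‖((0:ℝ), (1:ℝ))‖ :=
                (fderiv ℝ v (x, t)).le_opNorm _
              _ = ‖fderiv ℝ v (x, t)‖ := by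
                simp [Prod.norm_def]
        _ ≤ ∫ t in (0:ℝ)..(h x), ‖fderiv ℝ v (x, t)‖ :=
            intervalIntegral.integral_mono_interval le_rfl hy.1.le hy.2.le
              (Filter.Eventually.of_forall fun t => hD0 _) (hDxc.intervalIntegrable 0 (h x))
        _ = ∫ t in Set.Ioo 0 (h x), ‖fderiv ℝ v (x, t)‖ := by
            rw [intervalIntegral.integral_of_le hhx0, integral_Ioc_eq_integral_Ioo]
    have hstep2 := holder_iv (g := fun t => ‖fderiv ℝ v (x, t)‖) (b := h x)
      hDxc (fun t => hD0 _) hp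
    have hhC : h x ^ (p - 1) ≤ C ^ (p - 1) :=
      Real.rpow_le_rpow hhx0 (hhle x hxIcc) (by linarith)
    calc |v (x, y)| ^ p ≤ (∫ t in Set.Ioo 0 (h x), ‖fderiv ℝ v (x, t)‖) ^ p :=
        Real.rpow_le_rpow (abs_nonneg _) hstep1 hp0.le
      _ ≤ h x ^ (p - 1) * ∫ t in Set.Ioo 0 (h x), ‖fderiv ℝ v (x, t)‖ ^ p := hstep2
      _ ≤ C ^ (p - 1) * ∫ t in Set.Ioo 0 (h x), ‖fderiv ℝ v (x, t)‖ ^ p :=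
        mul_le_mul_of_nonneg_right hhC (hKnn x)
  -- lintegral assembly
  have E1 : (∫⁻ q in Ω, ENNReal.ofReal (|v q| ^ p))
      = ∫⁻ x in Set.Ioo α (α + r), ∫⁻ y in Set.Ioo 0 (h x), ENNReal.ofReal (|v (x, y)| ^ p) :=
    omega_fubini α (α + r) h hΩm _ (hvp.measurable.ennreal_ofReal)
  have E2 : (∫⁻ q in Ω, ENNReal.ofReal (‖fderiv ℝ v q‖ ^ p))
      = ∫⁻ x in Set.Ioo α (α + r), ∫⁻ y in Set.Ioo 0 (h x),
          ENNReal.ofReal (‖fderiv ℝ v (x, y)‖ ^ p) :=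
    omega_fubini α (α + r) h hΩm _ (hDp.measurable.ennreal_ofReal)
  have hKof : ∀ x : ℝ, ENNReal.ofReal (∫ t in Set.Ioo 0 (h x), ‖fderiv ℝ v (x, t)‖ ^ p)
      = ∫⁻ y in Set.Ioo 0 (h x), ENNReal.ofReal (‖fderiv ℝ v (x, y)‖ ^ p) := fun x =>
    ofReal_integral_eq_lintegral_ofReal (hKint x)
      (Filter.Eventually.of_forall fun t => Real.rpow_nonneg (hD0 _) p)
  have hCppos : (0:ℝ) < C ^ p := Real.rpow_pos_of_pos hC p
  have slice : ∀ x ∈ Set.Ioo α (α + r),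
      (∫⁻ y in Set.Ioo 0 (h x), ENNReal.ofReal (|v (x, y)| ^ p))
        ≤ ENNReal.ofReal (C ^ p) *
            ∫⁻ y in Set.Ioo 0 (h x), ENNReal.ofReal (‖fderiv ℝ v (x, y)‖ ^ p) := by
    intro x hx
    have hxIcc : x ∈ Set.Icc α (α + r) := ⟨hx.1.le, hx.2.le⟩
    set K := ∫ t in Set.Ioo 0 (h x), ‖fderiv ℝ v (x, t)‖ ^ p with hK
    have hCK : (0:ℝ) ≤ C ^ (p - 1) * K :=
      mul_nonneg (Real.rpow_nonneg hC.le _) (hKnn x)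
    calc (∫⁻ y in Set.Ioo 0 (h x), ENNReal.ofReal (|v (x, y)| ^ p))
        ≤ ∫⁻ _ in Set.Ioo 0 (h x), ENNReal.ofReal (C ^ (p - 1) * K) :=
          setLIntegral_mono' measurableSet_Ioo fun y hy =>
            ENNReal.ofReal_le_ofReal (core x hx y hy)
      _ = ENNReal.ofReal (C ^ (p - 1) * K) * ENNReal.ofReal (h x) := by
          rw [setLIntegral_const, Real.volume_Ioo, sub_zero]
      _ ≤ ENNReal.ofReal (C ^ (p - 1) * K) * ENNReal.ofReal C :=
          mul_le_mul_right (ENNReal.ofReal_le_ofReal (hhle x hxIcc)) _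
      _ = ENNReal.ofReal (C ^ p) * ENNReal.ofReal K := by
          rw [← ENNReal.ofReal_mul hCK, ← ENNReal.ofReal_mul hCppos.le]
          congr 1
          have hCp : C ^ (p - 1) * C = C ^ p := by
            rw [← Real.rpow_add_one hC.ne' (p - 1), sub_add_cancel]
          calc C ^ (p - 1) * K * C = (C ^ (p - 1) * C) * K := by ring
            _ = C ^ p * K := by rw [hCp]
      _ = ENNReal.ofReal (C ^ p) *
            ∫⁻ y in Set.Ioo 0 (h x), ENNReal.ofReal (‖fderiv ℝ v (x, y)‖ ^ p) := by
          rw [hK, hKof]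
  have main : (∫⁻ q in Ω, ENNReal.ofReal (|v q| ^ p))
      ≤ ENNReal.ofReal (C ^ p) * ∫⁻ q in Ω, ENNReal.ofReal (‖fderiv ℝ v q‖ ^ p) := by
    rw [E1, E2, ← lintegral_const_mul' _ _ ENNReal.ofReal_ne_top]
    exact setLIntegral_mono' measurableSet_Ioo slice
  -- finiteness
  have hKcomp : IsCompact (Set.Icc α (α + r) ×ˢ Set.Icc 0 C) := isCompact_Icc.prod isCompact_Icc
  have hΩsub : Ω ⊆ Set.Icc α (α + r) ×ˢ Set.Icc 0 C := by
    rintro ⟨x, y⟩ ⟨h1, h2, h3, h4⟩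
    exact ⟨⟨h1.le, h2.le⟩, ⟨h3.le, h4.le.trans (hhle x ⟨h1.le, h2.le⟩)⟩⟩
  obtain ⟨M, hM⟩ := hKcomp.exists_bound_of_continuousOn hDp.continuousOn
  have Rfin : (∫⁻ q in Ω, ENNReal.ofReal (‖fderiv ℝ v q‖ ^ p)) < ⊤ := by
    calc (∫⁻ q in Ω, ENNReal.ofReal (‖fderiv ℝ v q‖ ^ p))
        ≤ ∫⁻ _ in Ω, ENNReal.ofReal M := by
          apply setLIntegral_mono' hΩm
          intro q hq
          apply ENNReal.ofReal_le_ofReal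
          have := hM q (hΩsub hq)
          rwa [Real.norm_eq_abs, abs_of_nonneg (Real.rpow_nonneg (hD0 q) p)] at this
      _ = ENNReal.ofReal M * volume Ω := by rw [setLIntegral_const]
      _ ≤ ENNReal.ofReal M * volume (Set.Icc α (α + r) ×ˢ Set.Icc 0 C) :=
          mul_le_mul_right (measure_mono hΩsub) _
      _ < ⊤ := ENNReal.mul_lt_top ENNReal.ofReal_lt_top hKcomp.measure_lt_top
  -- back to Bochner integrals
  have lhs_eq : (∫ q in Ω, |v q| ^ p)
      = (∫⁻ q in Ω, ENNReal.ofReal (|v q| ^ p)).toReal :=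
    integral_eq_lintegral_of_nonneg_ae
      (Filter.Eventually.of_forall fun q => Real.rpow_nonneg (abs_nonneg _) p)
      hvp.aestronglyMeasurable
  have rhs_eq : (∫ q in Ω, ‖fderiv ℝ v q‖ ^ p)
      = (∫⁻ q in Ω, ENNReal.ofReal (‖fderiv ℝ v q‖ ^ p)).toReal :=
    integral_eq_lintegral_of_nonneg_ae
      (Filter.Eventually.of_forall fun q => Real.rpow_nonneg (hD0 q) p)
      hDp.aestronglyMeasurable
  have part1 : (∫ q in Ω, |v q| ^ p) ≤ C ^ p * ∫ q in Ω, ‖fderiv ℝ v q‖ ^ p := by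
    rw [lhs_eq, rhs_eq]
    calc (∫⁻ q in Ω, ENNReal.ofReal (|v q| ^ p)).toReal
        ≤ (ENNReal.ofReal (C ^ p) * ∫⁻ q in Ω, ENNReal.ofReal (‖fderiv ℝ v q‖ ^ p)).toReal :=
          ENNReal.toReal_mono (ENNReal.mul_ne_top ENNReal.ofReal_ne_top Rfin.ne) main
      _ = C ^ p * (∫⁻ q in Ω, ENNReal.ofReal (‖fderiv ℝ v q‖ ^ p)).toReal := by
          rw [ENNReal.toReal_mul, ENNReal.toReal_ofReal hCppos.le]
  refine ⟨part1, ?_⟩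
  have hLnn : 0 ≤ ∫ q in Ω, |v q| ^ p :=
    setIntegral_nonneg hΩm fun q _ => Real.rpow_nonneg (abs_nonneg _) p
  have hRnn : 0 ≤ ∫ q in Ω, ‖fderiv ℝ v q‖ ^ p :=
    setIntegral_nonneg hΩm fun q _ => Real.rpow_nonneg (hD0 q) p
  have h2 := Real.rpow_le_rpow hLnn part1 (by positivity : (0:ℝ) ≤ 1 / p)
  rw [Real.mul_rpow hCppos.le hRnn] at h2
  have hCpp : (C ^ p) ^ (1 / p) = C := by
    rw [one_div, Real.rpow_rpow_inv hC.le hp0.ne']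
  rwa [hCpp] at h2
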